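/- The set F_∞ = {(s₁,s₂,r,h) ∈ ℝ²×(ℝ⁺)² : |s₁| ≤ 1/2, |s₂| ≤ 1/2, ε₀^{−2} ≤ r ≤ ε₀²} is a fundamental domain for the action of Γ_∞ on H²×H²: the boundary of F_∞ has Lebesgue measure 0, the translates γ(F_∞) for γ ∈ Γ_∞ cover H²×H², and for every γ ∈ Γ_∞ with γ ≠ 1 there is no point Z such that both Z and γ(Z) lie in the interior of F_∞. -/

import Mathlib

noncomputable section

open scoped Classical
open MeasureTheory

namespace Hilbert

/-- `k₀ = 2` if `k ≡ 1 (mod 4)` and `k₀ = 1` otherwise. -/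
def k0 (k : ℕ) : ℝ := if k % 4 = 1 then 2 else 1

/-- `ω = (1 + √k)/k₀`. -/
def omg (k : ℕ) : ℝ := (1 + Real.sqrt k) / k0 k

/-- `ω' = (1 - √k)/k₀`, the algebraic conjugate of `ω`. -/
def omg' (k : ℕ) : ℝ := (1 - Real.sqrt k) / k0 k

/-- The ring `R = ℤ[ω]`, realized inside `ℝ × ℝ` via the pair of real embeddings
`α ↦ (α, α')` of `K = ℚ(√k)`. -/
def R (k : ℕ) : Subring (ℝ × ℝ) := Subring.closure {(omg k, omg' k)}

/-- The ambient space `ℝ⁴`, with coordinates `(x₁, x₂, y₁, y₂)`. -/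
abbrev Pt : Type := ℝ × ℝ × ℝ × ℝ

def x1 (p : Pt) : ℝ := p.1
def x2 (p : Pt) : ℝ := p.2.1
def y1 (p : Pt) : ℝ := p.2.2.1
def y2 (p : Pt) : ℝ := p.2.2.2

/-- `H² × H²`, identified with an open subset of `ℝ⁴`. -/
def HH : Set Pt := {p | 0 < y1 p ∧ 0 < y2 p}

/-- The coordinate `s₁`, determined by `x₁ = s₁ + s₂ ω`, `x₂ = s₁ + s₂ ω'`. -/
def s1 (k : ℕ) (p : Pt) : ℝ := (omg' k * x1 p - omg k * x2 p) / (omg' k - omg k)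

/-- The coordinate `s₂`. -/
def s2 (k : ℕ) (p : Pt) : ℝ := (x1 p - x2 p) / (omg k - omg' k)

/-- The ratio `r = y₁/y₂`. -/
def rr (p : Pt) : ℝ := y1 p / y2 p

/-- The height `h = y₁ y₂`. -/
def hh (p : Pt) : ℝ := y1 p * y2 p

/-- `‖cZ+d‖ = ((cx₁+d)² + c²y₁²)((c'x₂+d')² + c'²y₂²)`, where `c = (c, c')`, `d = (d, d')`
are given by their two real embeddings. -/
def HNorm (c d : ℝ × ℝ) (p : Pt) : ℝ :=
  ((c.1 * x1 p + d.1) ^ 2 + c.1 ^ 2 * y1 p ^ 2) *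
    ((c.2 * x2 p + d.2) ^ 2 + c.2 ^ 2 * y2 p ^ 2)

/-- `S = {(c,d) ∈ R² : cR + dR = R}`. -/
def Spairs (k : ℕ) : Set (R k × R k) := {cd | Ideal.span {cd.1, cd.2} = ⊤}

/-- `V_{c,d}^≥ = {Z ∈ H²×H² : ‖cZ+d‖ ≥ 1}`. -/
def Vge (k : ℕ) (cd : R k × R k) : Set Pt :=
  {p ∈ HH | 1 ≤ HNorm (cd.1 : ℝ × ℝ) (cd.2 : ℝ × ℝ) p}

/-- `V_{c,d}^≤ = {Z ∈ H²×H² : ‖cZ+d‖ ≤ 1}`. -/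
def Vle (k : ℕ) (cd : R k × R k) : Set Pt :=
  {p ∈ HH | HNorm (cd.1 : ℝ × ℝ) (cd.2 : ℝ × ℝ) p ≤ 1}

/-- `V_{c,d} = {Z ∈ H²×H² : ‖cZ+d‖ = 1}`. -/
def Veq (k : ℕ) (cd : R k × R k) : Set Pt :=
  {p ∈ HH | HNorm (cd.1 : ℝ × ℝ) (cd.2 : ℝ × ℝ) p = 1}

/-- `F₀ = {Z ∈ H²×H² : ‖cZ+d‖ ≥ 1 for all (c,d) ∈ S}`. -/
def F0 (k : ℕ) : Set Pt :=
  {p ∈ HH | ∀ cd ∈ Spairs k, 1 ≤ HNorm (cd.1 : ℝ × ℝ) (cd.2 : ℝ × ℝ) p}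

/-- `F_∞ = {(s₁,s₂,r,h) : |s₁| ≤ 1/2, |s₂| ≤ 1/2, ε₀⁻² ≤ r ≤ ε₀²}`, where `ε` stands
for the fundamental unit `ε₀`. -/
def FInf (k : ℕ) (ε : ℝ) : Set Pt :=
  {p ∈ HH | |s1 k p| ≤ 1 / 2 ∧ |s2 k p| ≤ 1 / 2 ∧ (ε ^ 2)⁻¹ ≤ rr p ∧ rr p ≤ ε ^ 2}

/-- `F = F_∞ ∩ F₀`. -/
def F (k : ℕ) (ε : ℝ) : Set Pt := FInf k ε ∩ F0 k

/-- `SL₂(R)`. -/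
abbrev SL (k : ℕ) := Matrix.SpecialLinearGroup (Fin 2) (R k)

/-- Möbius action on the upper half-plane: image of `x + y i` under `(a b; c d)`. -/
def moeb (a b c d x y : ℝ) : ℝ × ℝ :=
  (((a * x + b) * (c * x + d) + a * c * y ^ 2) / ((c * x + d) ^ 2 + c ^ 2 * y ^ 2),
    y / ((c * x + d) ^ 2 + c ^ 2 * y ^ 2))

/-- The action of `γ ∈ SL₂(R)` on `H²×H²`: `γ` acts on the first factor through the first
embedding and through the conjugate matrix `γ'` (second embedding) on the second factor.
This descends to the Hilbert modular group `PSL₂(R)`. -/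
def act (k : ℕ) (g : SL k) (p : Pt) : Pt :=
  ((moeb (g.1 0 0 : ℝ × ℝ).1 (g.1 0 1 : ℝ × ℝ).1 (g.1 1 0 : ℝ × ℝ).1 (g.1 1 1 : ℝ × ℝ).1
      (x1 p) (y1 p)).1,
   (moeb (g.1 0 0 : ℝ × ℝ).2 (g.1 0 1 : ℝ × ℝ).2 (g.1 1 0 : ℝ × ℝ).2 (g.1 1 1 : ℝ × ℝ).2
      (x2 p) (y2 p)).1,
   (moeb (g.1 0 0 : ℝ × ℝ).1 (g.1 0 1 : ℝ × ℝ).1 (g.1 1 0 : ℝ × ℝ).1 (g.1 1 1 : ℝ × ℝ).1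
      (x1 p) (y1 p)).2,
   (moeb (g.1 0 0 : ℝ × ℝ).2 (g.1 0 1 : ℝ × ℝ).2 (g.1 1 0 : ℝ × ℝ).2 (g.1 1 1 : ℝ × ℝ).2
      (x2 p) (y2 p)).2)

/-- The pair of real embeddings of a unit of `R`. -/
def unitVal (k : ℕ) (u : (R k)ˣ) : ℝ × ℝ := ((u : R k) : ℝ × ℝ)

/-- `e` is the fundamental unit of `R`: the smallest unit of `R` greater than `1`
(with respect to the first embedding). -/
def IsFundUnit (k : ℕ) (e : (R k)ˣ) : Prop :=
  1 < (unitVal k e).1 ∧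
    ∀ v : (R k)ˣ, 1 < (unitVal k v).1 → (unitVal k e).1 ≤ (unitVal k v).1

/-- The real number `ε₀ > 1`, the fundamental unit under the first embedding. -/
def eps (k : ℕ) (e : (R k)ˣ) : ℝ := (unitVal k e).1


/-- The norm `N(c) = c c'` of an element of `R` (as a real number). -/
def Nm (k : ℕ) (c : R k) : ℝ := ((c : ℝ × ℝ)).1 * ((c : ℝ × ℝ)).2

/-- A subset `C` of `H²×H²` is hyperbolically bounded if it is bounded in the
Euclidean metric and `y₁, y₂ > ε` on `C` for some `ε > 0`. -/
def HypBounded (C : Set Pt) : Prop :=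
  C ⊆ HH ∧ Bornology.IsBounded C ∧ ∃ ε > (0 : ℝ), ∀ p ∈ C, ε < y1 p ∧ ε < y2 p

/-- `V_{C,μ} = {(c,d) ∈ R × R : ‖cZ+d‖ ≤ μ for some Z ∈ C}`. -/
def VCmu (k : ℕ) (C : Set Pt) (μ : ℝ) : Set (R k × R k) :=
  {cd | ∃ p ∈ C, HNorm (cd.1 : ℝ × ℝ) (cd.2 : ℝ × ℝ) p ≤ μ}

/-- The conditions (8) of Theorem `FiniteSides` on a pair `(c,d) ∈ R²`. -/
def SCond (k : ℕ) (ε : ℝ) (cd : R k × R k) : Prop :=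
  cd.1 ≠ 0 ∧ Ideal.span {cd.1, cd.2} = ⊤ ∧
    |Nm k cd.1| ≤ 2 * k / (k0 k) ^ 2 ∧
    |((cd.2 : ℝ × ℝ)).1 / ((cd.1 : ℝ × ℝ)).1| <
      ε * Real.sqrt (2 * k / (Nm k cd.1 ^ 2 * (k0 k) ^ 2) - (k0 k) ^ 2 / (2 * k)) +
        (1 + omg k) / 2 ∧
    |((cd.2 : ℝ × ℝ)).2 / ((cd.1 : ℝ × ℝ)).2| <
      ε * Real.sqrt (2 * k / (Nm k cd.1 ^ 2 * (k0 k) ^ 2) - (k0 k) ^ 2 / (2 * k)) +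
        (1 - omg' k) / 2

/-- `S₁` is a set of representatives, up to multiplication by units of `R`, of the pairs
`(c,d) ∈ R²` satisfying the conditions `SCond`. -/
def IsRepSet (k : ℕ) (ε : ℝ) (S1 : Set (R k × R k)) : Prop :=
  (∀ cd ∈ S1, SCond k ε cd) ∧
    (∀ cd : R k × R k, SCond k ε cd →
      ∃ ab ∈ S1, ∃ u : (R k)ˣ, cd.1 = (u : R k) * ab.1 ∧ cd.2 = (u : R k) * ab.2) ∧
    (∀ ab ∈ S1, ∀ ab' ∈ S1,
      (∃ u : (R k)ˣ, ab'.1 = (u : R k) * ab.1 ∧ ab'.2 = (u : R k) * ab.2) → ab = ab')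

/-- The family `𝒱_∞ = {V_i^± : i = 1,2,3}`. -/
def VfamInf (k : ℕ) (ε : ℝ) : Set (Set Pt) :=
  { {p ∈ HH | s1 k p = 1 / 2}, {p ∈ HH | s1 k p = -(1 / 2)},
    {p ∈ HH | s2 k p = 1 / 2}, {p ∈ HH | s2 k p = -(1 / 2)},
    {p ∈ HH | rr p = ε ^ 2}, {p ∈ HH | rr p = (ε ^ 2)⁻¹} }

/-- The family `𝒱 = {V_{c,d} : (c,d) ∈ S, c ≠ 0}`. -/
def Vfam (k : ℕ) : Set (Set Pt) :=
  {V | ∃ cd ∈ Spairs k, cd.1 ≠ 0 ∧ V = Veq k cd}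

/-- The family `𝓜 = {γ(M) : γ ∈ Γ, M ∈ 𝒱 ∪ 𝒱_∞}`. -/
def Mfam (k : ℕ) (ε : ℝ) : Set (Set Pt) :=
  {M | ∃ g : SL k, ∃ V ∈ Vfam k ∪ VfamInf k ε, M = act k g '' V}

/-- `ω` as an element of `R`. -/
def omR (k : ℕ) : R k := ⟨(omg k, omg' k), Subring.subset_closure rfl⟩

/-- The side-pairing transformations: `γ ≠ 1` (in `PSL₂(R)`) such that `F ∩ γ⁻¹(F)` has
Hausdorff dimension `3`. -/
def SidePairings (k : ℕ) (ε : ℝ) : Set (SL k) :=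
  {g | g ≠ 1 ∧ g.1 ≠ -1 ∧ dimH (F k ε ∩ act k g⁻¹ '' F k ε) = 3}

section Aux

variable (k : ℕ)

lemma k0_pos : 0 < k0 k := by unfold k0; split <;> norm_num

lemma sq_sqrt' (hk1 : 1 < k) : Real.sqrt k ^ 2 = k := by
  rw [Real.sq_sqrt]; positivity

lemma one_lt_sqrt (hk1 : 1 < k) : 1 < Real.sqrt k := by
  rw [show (1:ℝ) = Real.sqrt 1 by simp]
  exact Real.sqrt_lt_sqrt (by norm_num) (by exact_mod_cast hk1)

lemma omg_pos (hk1 : 1 < k) : 0 < omg k := by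
  have := one_lt_sqrt k hk1
  have := k0_pos k
  unfold omg; positivity

lemma omg'_neg (hk1 : 1 < k) : omg' k < 0 := by
  have h := one_lt_sqrt k hk1
  have h2 := k0_pos k
  unfold omg'
  apply div_neg_of_neg_of_pos _ h2; linarith

lemma omg_sub_omg' (hk1 : 1 < k) : 0 < omg k - omg' k := by
  have h := one_lt_sqrt k hk1
  have h2 := k0_pos k
  unfold omg omg'
  rw [div_sub_div_same]
  apply div_pos _ h2; linarith

/-- integer coefficients of the minimal polynomial of ω : ω² = c2 ω + c1 -/
def c2 (k : ℕ) : ℤ := if k % 4 = 1 then 1 else 2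
def c1 (k : ℕ) : ℤ := if k % 4 = 1 then (k / 4 : ℕ) else (k : ℤ) - 1

lemma omg_add_omg' : omg k + omg' k = (c2 k : ℝ) := by
  unfold omg omg' k0 c2
  split_ifs <;> push_cast <;> ring

lemma omg_mul_omg' (hk1 : 1 < k) : omg k * omg' k = -(c1 k : ℝ) := by
  have hs := sq_sqrt' k hk1
  unfold omg omg' k0 c1
  split_ifs with h
  · have h4 : 4 * ((k/4 : ℕ) : ℝ) + 1 = (k : ℝ) := by
      have : ((4 * (k/4) + 1 : ℕ) : ℝ) = (k : ℝ) := by congr 1; omega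
      push_cast at this; linarith
    rw [Int.cast_natCast]
    nlinarith [hs, h4]
  · push_cast
    nlinarith [hs]

lemma omg_sq (hk1 : 1 < k) :
    omg k ^ 2 = (c2 k : ℝ) * omg k + (c1 k : ℝ) := by
  have h1 := omg_add_omg' k
  have h2 := omg_mul_omg' k hk1
  linear_combination omg k * h1 - h2

lemma omg'_sq (hk1 : 1 < k) :
    omg' k ^ 2 = (c2 k : ℝ) * omg' k + (c1 k : ℝ) := by
  have h1 := omg_add_omg' k
  have h2 := omg_mul_omg' k hk1
  linear_combination omg' k * h1 - h2

/-- Every element of R is of the form m + n ω. -/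
lemma rep (hk1 : 1 < k) (z : R k) :
    ∃ m n : ℤ, (z : ℝ × ℝ) = ((m : ℝ) + n * omg k, (m : ℝ) + n * omg' k) := by
  obtain ⟨z, hz⟩ := z
  show ∃ m n : ℤ, z = ((m : ℝ) + n * omg k, (m : ℝ) + n * omg' k)
  refine Subring.closure_induction ?_ ?_ ?_ ?_ ?_ ?_ hz
  · rintro x rfl
    exact ⟨0, 1, by push_cast; simp⟩
  · exact ⟨0, 0, by push_cast; simp; rfl⟩
  · exact ⟨1, 0, by push_cast; simp; rfl⟩
  · rintro x y - - ⟨m, n, hx⟩ ⟨p, q, hy⟩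
    obtain ⟨hx1, hx2⟩ := Prod.ext_iff.mp hx
    obtain ⟨hy1, hy2⟩ := Prod.ext_iff.mp hy
    refine ⟨m + p, n + q, Prod.ext ?_ ?_⟩
    · rw [Prod.fst_add, hx1, hy1]; push_cast; ring
    · rw [Prod.snd_add, hx2, hy2]; push_cast; ring
  · rintro x - ⟨m, n, hx⟩
    obtain ⟨hx1, hx2⟩ := Prod.ext_iff.mp hx
    refine ⟨-m, -n, Prod.ext ?_ ?_⟩
    · rw [Prod.fst_neg, hx1]; push_cast; ring
    · rw [Prod.snd_neg, hx2]; push_cast; ring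
  · rintro x y - - ⟨m, n, hx⟩ ⟨p, q, hy⟩
    obtain ⟨hx1, hx2⟩ := Prod.ext_iff.mp hx
    obtain ⟨hy1, hy2⟩ := Prod.ext_iff.mp hy
    refine ⟨m * p + n * q * c1 k, m * q + n * p + n * q * c2 k, Prod.ext ?_ ?_⟩
    · rw [Prod.fst_mul, hx1, hy1]; push_cast
      linear_combination (n : ℝ) * q * omg_sq k hk1
    · rw [Prod.snd_mul, hx2, hy2]; push_cast
      linear_combination (n : ℝ) * q * omg'_sq k hk1

lemma Nm_int (hk1 : 1 < k) (z : R k) : ∃ m : ℤ, Nm k z = (m : ℝ) := by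
  obtain ⟨m, n, hz⟩ := rep k hk1 z
  refine ⟨m ^ 2 + m * n * c2 k - n ^ 2 * c1 k, ?_⟩
  unfold Nm
  rw [hz]
  push_cast
  linear_combination (n:ℝ)^2 * omg_mul_omg' k hk1 + ((m:ℝ)*n) * omg_add_omg' k

lemma Nm_mul (z w : R k) : Nm k (z * w) = Nm k z * Nm k w := by
  unfold Nm; push_cast; simp only [Prod.fst_mul, Prod.snd_mul]; ring

lemma Nm_one : Nm k 1 = 1 := by unfold Nm; norm_num

end Aux
section Null

instance haar2 : MeasureTheory.Measure.IsAddHaarMeasure (volume : MeasureTheory.Measure (ℝ × ℝ)) :=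
  MeasureTheory.Measure.prod.instIsAddHaarMeasure volume volume

instance haar3 : MeasureTheory.Measure.IsAddHaarMeasure (volume : MeasureTheory.Measure (ℝ × ℝ × ℝ)) :=
  MeasureTheory.Measure.prod.instIsAddHaarMeasure volume volume

instance haar4 : MeasureTheory.Measure.IsAddHaarMeasure (volume : MeasureTheory.Measure Pt) :=
  MeasureTheory.Measure.prod.instIsAddHaarMeasure volume volume

/-- A hyperplane in ℝ⁴ has measure zero. -/
lemma null_hyperplane (a b c d t : ℝ) (h : a ≠ 0 ∨ b ≠ 0 ∨ c ≠ 0 ∨ d ≠ 0) :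
    MeasureTheory.volume
      {p : Pt | a * p.1 + b * p.2.1 + c * p.2.2.1 + d * p.2.2.2 = t} = 0 := by
  set L : Pt →ₗ[ℝ] ℝ :=
    { toFun := fun p => a * p.1 + b * p.2.1 + c * p.2.2.1 + d * p.2.2.2
      map_add' := by intro p q; simp only [Prod.fst_add, Prod.snd_add]; ring
      map_smul' := by
        intro r p
        simp only [Prod.smul_fst, Prod.smul_snd, smul_eq_mul, RingHom.id_apply]
        ring } with hLdef
  have hex : ∃ x : Pt, L x ≠ 0 := by
    rcases h with h | h | h | h
    · exact ⟨(1, 0, 0, 0), by simpa [hLdef] using h⟩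
    · exact ⟨(0, 1, 0, 0), by simpa [hLdef] using h⟩
    · exact ⟨(0, 0, 1, 0), by simpa [hLdef] using h⟩
    · exact ⟨(0, 0, 0, 1), by simpa [hLdef] using h⟩
  obtain ⟨x₀, hx₀⟩ := hex
  have hL : L ≠ 0 := by
    intro h0; exact hx₀ (by rw [h0]; rfl)
  set v : Pt := (t / L x₀) • x₀ with hv
  have hLv : L v = t := by
    rw [hv, L.map_smul, smul_eq_mul, div_mul_cancel₀ _ hx₀]
  have hset : {p : Pt | a * p.1 + b * p.2.1 + c * p.2.2.1 + d * p.2.2.2 = t}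
      = (fun p => -v + p) ⁻¹' (LinearMap.ker L : Set Pt) := by
    ext p
    simp only [Set.mem_setOf_eq, Set.mem_preimage, SetLike.mem_coe, LinearMap.mem_ker,
      map_add, map_neg, hLv]
    constructor
    · intro hp
      have : L p = t := hp
      rw [this]; ring
    · intro hp
      have : L p = t := by linarith [hp]
      exact this
  rw [hset, measure_preimage_add]
  exact MeasureTheory.Measure.addHaar_submodule _ _ (by
    rw [Ne, LinearMap.ker_eq_top]; exact hL)

end Null

section Part1

variable (k : ℕ)

lemma cont_s1 : Continuous (s1 k) := by
  unfold s1 x1 x2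
  fun_prop

lemma cont_s2 : Continuous (s2 k) := by
  unfold s2 x1 x2
  fun_prop

lemma cont_y1 : Continuous y1 := by unfold y1; fun_prop

lemma cont_y2 : Continuous y2 := by unfold y2; fun_prop

lemma isOpen_HH : IsOpen HH := by
  unfold HH
  exact (isOpen_lt continuous_const cont_y1).inter (isOpen_lt continuous_const cont_y2)

lemma part1 (hk1 : 1 < k) (ε : ℝ) (hε : 0 < ε) :
    MeasureTheory.volume (frontier (FInf k ε) ∩ HH) = 0 := by
  have hw := omg_pos k hk1
  have hw' := omg'_neg k hk1
  have hww' := omg_sub_omg' k hk1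
  have hε2 : (0:ℝ) < ε ^ 2 := by positivity
  set E1 : Set Pt := {p | s1 k p = 1/2}
  set E2 : Set Pt := {p | s1 k p = -(1/2)}
  set E3 : Set Pt := {p | s2 k p = 1/2}
  set E4 : Set Pt := {p | s2 k p = -(1/2)}
  set E5 : Set Pt := {p | y1 p = ε^2 * y2 p}
  set E6 : Set Pt := {p | y2 p = ε^2 * y1 p}
  -- closure of FInf is inside the closed version
  set G : Set Pt := {p | |s1 k p| ≤ 1/2 ∧ |s2 k p| ≤ 1/2 ∧
      y2 p ≤ ε^2 * y1 p ∧ y1 p ≤ ε^2 * y2 p} with hG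
  have hFG : FInf k ε ⊆ G := by
    rintro q ⟨⟨hy1, hy2⟩, h1, h2, h3, h4⟩
    refine ⟨h1, h2, ?_, ?_⟩
    · have h5 : (ε^2)⁻¹ * y2 q ≤ y1 q := (le_div_iff₀ hy2).mp h3
      have h6 : y2 q = ε^2 * ((ε^2)⁻¹ * y2 q) := by field_simp
      rw [h6]
      exact mul_le_mul_of_nonneg_left h5 hε2.le
    · have h5 : y1 q / y2 q ≤ ε^2 := h4
      rw [div_le_iff₀ hy2] at h5
      linarith [h5]
  have hGclosed : IsClosed G := by
    apply IsClosed.inter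
    · exact isClosed_le ((cont_s1 k).abs) continuous_const
    apply IsClosed.inter
    · exact isClosed_le ((cont_s2 k).abs) continuous_const
    apply IsClosed.inter
    · exact isClosed_le cont_y2 (continuous_const.mul cont_y1)
    · exact isClosed_le cont_y1 (continuous_const.mul cont_y2)
  have hsub : frontier (FInf k ε) ∩ HH ⊆ E1 ∪ E2 ∪ E3 ∪ E4 ∪ E5 ∪ E6 := by
    rintro p ⟨hpf, hpH⟩
    by_contra hnot
    simp only [Set.mem_union, not_or] at hnot
    obtain ⟨⟨⟨⟨⟨hn1, hn2⟩, hn3⟩, hn4⟩, hn5⟩, hn6⟩ := hnot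
    have hpG : p ∈ G := (closure_minimal hFG hGclosed) hpf.1
    obtain ⟨hg1, hg2, hg3, hg4⟩ := hpG
    -- strict inequalities
    have hs1 : |s1 k p| < 1/2 := by
      rcases lt_or_eq_of_le hg1 with h | h
      · exact h
      · exfalso
        rcases abs_eq (by norm_num : (0:ℝ) ≤ 1/2) |>.mp h with h' | h'
        · exact hn1 h'
        · exact hn2 h'
    have hs2 : |s2 k p| < 1/2 := by
      rcases lt_or_eq_of_le hg2 with h | h
      · exact h
      · exfalso
        rcases abs_eq (by norm_num : (0:ℝ) ≤ 1/2) |>.mp h with h' | h'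
        · exact hn3 h'
        · exact hn4 h'
    have hs3 : y2 p < ε^2 * y1 p := lt_of_le_of_ne hg3 (fun h => hn6 h)
    have hs4 : y1 p < ε^2 * y2 p := lt_of_le_of_ne hg4 (fun h => hn5 h)
    -- p is interior
    have hopen : IsOpen (HH ∩ {q | |s1 k q| < 1/2} ∩ {q | |s2 k q| < 1/2} ∩
        {q | y2 q < ε^2 * y1 q} ∩ {q | y1 q < ε^2 * y2 q}) := by
      apply IsOpen.inter
      apply IsOpen.inter
      apply IsOpen.inter
      apply IsOpen.inter
      · exact isOpen_HH
      · exact isOpen_lt ((cont_s1 k).abs) continuous_const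
      · exact isOpen_lt ((cont_s2 k).abs) continuous_const
      · exact isOpen_lt cont_y2 (continuous_const.mul cont_y1)
      · exact isOpen_lt cont_y1 (continuous_const.mul cont_y2)
    have hsubF : (HH ∩ {q | |s1 k q| < 1/2} ∩ {q | |s2 k q| < 1/2} ∩
        {q | y2 q < ε^2 * y1 q} ∩ {q | y1 q < ε^2 * y2 q}) ⊆ FInf k ε := by
      rintro q ⟨⟨⟨⟨hqH, hq1⟩, hq2⟩, hq3⟩, hq4⟩
      simp only [Set.mem_setOf_eq] at hq1 hq2 hq3 hq4
      refine ⟨hqH, le_of_lt hq1, le_of_lt hq2, ?_, ?_⟩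
      · rw [rr, le_div_iff₀ hqH.2]
        have h7 : (ε^2)⁻¹ * (ε^2 * y1 q) = y1 q := by field_simp
        linarith [mul_lt_mul_of_pos_left hq3 (inv_pos.mpr hε2), h7]
      · rw [rr, div_le_iff₀ hqH.2]
        linarith [hq4]
    have hpint : p ∈ interior (FInf k ε) :=
      Set.mem_of_subset_of_mem (interior_maximal hsubF hopen)
        ⟨⟨⟨⟨hpH, hs1⟩, hs2⟩, hs3⟩, hs4⟩
    exact hpf.2 hpint
  apply MeasureTheory.measure_mono_null hsub
  have hwne : omg' k - omg k ≠ 0 := by linarith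
  have hE1 : MeasureTheory.volume E1 = 0 := by
    apply MeasureTheory.measure_mono_null (s := E1)
      (t := {p : Pt | omg' k * p.1 + (-(omg k)) * p.2.1 + 0 * p.2.2.1 + 0 * p.2.2.2
        = (omg' k - omg k)/2})
    · intro p hp
      have : (omg' k * x1 p - omg k * x2 p) / (omg' k - omg k) = 1/2 := hp
      rw [div_eq_iff hwne] at this
      simp only [Set.mem_setOf_eq]
      unfold x1 x2 at this
      linarith [this]
    · exact null_hyperplane _ _ _ _ _ (Or.inl (by linarith))
  have hE2 : MeasureTheory.volume E2 = 0 := by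
    apply MeasureTheory.measure_mono_null (s := E2)
      (t := {p : Pt | omg' k * p.1 + (-(omg k)) * p.2.1 + 0 * p.2.2.1 + 0 * p.2.2.2
        = -((omg' k - omg k)/2)})
    · intro p hp
      have : (omg' k * x1 p - omg k * x2 p) / (omg' k - omg k) = -(1/2) := hp
      rw [div_eq_iff hwne] at this
      simp only [Set.mem_setOf_eq]
      unfold x1 x2 at this
      linarith [this]
    · exact null_hyperplane _ _ _ _ _ (Or.inl (by linarith))
  have hwne2 : omg k - omg' k ≠ 0 := by linarith
  have hE3 : MeasureTheory.volume E3 = 0 := by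
    apply MeasureTheory.measure_mono_null (s := E3)
      (t := {p : Pt | 1 * p.1 + (-1) * p.2.1 + 0 * p.2.2.1 + 0 * p.2.2.2
        = (omg k - omg' k)/2})
    · intro p hp
      have : (x1 p - x2 p) / (omg k - omg' k) = 1/2 := hp
      rw [div_eq_iff hwne2] at this
      simp only [Set.mem_setOf_eq]
      unfold x1 x2 at this
      linarith [this]
    · exact null_hyperplane _ _ _ _ _ (Or.inl one_ne_zero)
  have hE4 : MeasureTheory.volume E4 = 0 := by
    apply MeasureTheory.measure_mono_null (s := E4)
      (t := {p : Pt | 1 * p.1 + (-1) * p.2.1 + 0 * p.2.2.1 + 0 * p.2.2.2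
        = -((omg k - omg' k)/2)})
    · intro p hp
      have : (x1 p - x2 p) / (omg k - omg' k) = -(1/2) := hp
      rw [div_eq_iff hwne2] at this
      simp only [Set.mem_setOf_eq]
      unfold x1 x2 at this
      linarith [this]
    · exact null_hyperplane _ _ _ _ _ (Or.inl one_ne_zero)
  have hE5 : MeasureTheory.volume E5 = 0 := by
    apply MeasureTheory.measure_mono_null (s := E5)
      (t := {p : Pt | 0 * p.1 + 0 * p.2.1 + 1 * p.2.2.1 + (-(ε^2)) * p.2.2.2 = 0})
    · intro p hp
      have : y1 p = ε^2 * y2 p := hp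
      simp only [Set.mem_setOf_eq]
      unfold y1 y2 at this
      linarith [this]
    · exact null_hyperplane _ _ _ _ _ (Or.inr (Or.inr (Or.inl one_ne_zero)))
  have hE6 : MeasureTheory.volume E6 = 0 := by
    apply MeasureTheory.measure_mono_null (s := E6)
      (t := {p : Pt | 0 * p.1 + 0 * p.2.1 + (-(ε^2)) * p.2.2.1 + 1 * p.2.2.2 = 0})
    · intro p hp
      have : y2 p = ε^2 * y1 p := hp
      simp only [Set.mem_setOf_eq]
      unfold y1 y2 at this
      linarith [this]
    · exact null_hyperplane _ _ _ _ _ (Or.inr (Or.inr (Or.inr one_ne_zero)))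
  repeat' apply MeasureTheory.measure_union_null
  all_goals assumption

end Part1
section ActTri

variable (k : ℕ)

/-- first embedding as ring hom -/
def emb1 : R k →+* ℝ := (RingHom.fst ℝ ℝ).comp (R k).subtype
def emb2 : R k →+* ℝ := (RingHom.snd ℝ ℝ).comp (R k).subtype

lemma emb1_apply (z : R k) : emb1 k z = (z : ℝ × ℝ).1 := rfl
lemma emb2_apply (z : R k) : emb2 k z = (z : ℝ × ℝ).2 := rfl

lemma det_entries (g : SL k) (hc : g.1 1 0 = 0) :
    g.1 0 0 * g.1 1 1 = 1 := by
  have h := g.2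
  rw [Matrix.det_fin_two, hc, mul_zero, sub_zero] at h
  exact h

lemma det_entries1 (g : SL k) (hc : g.1 1 0 = 0) :
    ((g.1 0 0 : R k) : ℝ × ℝ).1 * ((g.1 1 1 : R k) : ℝ × ℝ).1 = 1 := by
  have h := congrArg (emb1 k) (det_entries k g hc)
  rw [map_mul, map_one] at h
  exact h

lemma det_entries2 (g : SL k) (hc : g.1 1 0 = 0) :
    ((g.1 0 0 : R k) : ℝ × ℝ).2 * ((g.1 1 1 : R k) : ℝ × ℝ).2 = 1 := by
  have h := congrArg (emb2 k) (det_entries k g hc)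
  rw [map_mul, map_one] at h
  exact h

lemma act_tri (g : SL k) (hc : g.1 1 0 = 0) (p : Pt) :
    act k g p =
      (((g.1 0 0 : R k) : ℝ × ℝ).1 ^ 2 * p.1
          + ((g.1 0 0 : R k) : ℝ × ℝ).1 * ((g.1 0 1 : R k) : ℝ × ℝ).1,
        ((g.1 0 0 : R k) : ℝ × ℝ).2 ^ 2 * p.2.1
          + ((g.1 0 0 : R k) : ℝ × ℝ).2 * ((g.1 0 1 : R k) : ℝ × ℝ).2,
        ((g.1 0 0 : R k) : ℝ × ℝ).1 ^ 2 * p.2.2.1,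
        ((g.1 0 0 : R k) : ℝ × ℝ).2 ^ 2 * p.2.2.2) := by
  have h1 := det_entries1 k g hc
  have h2 := det_entries2 k g hc
  set A1 := ((g.1 0 0 : R k) : ℝ × ℝ).1
  set A2 := ((g.1 0 0 : R k) : ℝ × ℝ).2
  set B1 := ((g.1 0 1 : R k) : ℝ × ℝ).1
  set B2 := ((g.1 0 1 : R k) : ℝ × ℝ).2
  set D1 := ((g.1 1 1 : R k) : ℝ × ℝ).1
  set D2 := ((g.1 1 1 : R k) : ℝ × ℝ).2
  have hD1 : D1 ≠ 0 := right_ne_zero_of_mul_eq_one h1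
  have hD2 : D2 ≠ 0 := right_ne_zero_of_mul_eq_one h2
  unfold act moeb x1 x2 y1 y2
  rw [hc]
  simp only [ZeroMemClass.coe_zero, Prod.fst_zero, Prod.snd_zero, zero_mul, zero_add,
    mul_zero, add_zero, ne_eq, OfNat.ofNat_ne_zero, not_false_eq_true, zero_pow]
  refine Prod.ext ?_ (Prod.ext ?_ (Prod.ext ?_ ?_))
  · show (A1 * p.1 + B1) * D1 / D1 ^ 2 = A1 ^ 2 * p.1 + A1 * B1
    rw [div_eq_iff (pow_ne_zero 2 hD1)]
    linear_combination (-(A1 * p.1 + B1) * D1) * h1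
  · show (A2 * p.2.1 + B2) * D2 / D2 ^ 2 = A2 ^ 2 * p.2.1 + A2 * B2
    rw [div_eq_iff (pow_ne_zero 2 hD2)]
    linear_combination (-(A2 * p.2.1 + B2) * D2) * h2
  · show p.2.2.1 / D1 ^ 2 = A1 ^ 2 * p.2.2.1
    rw [div_eq_iff (pow_ne_zero 2 hD1)]
    linear_combination (-(A1 * p.2.2.1 * D1) - p.2.2.1) * h1
  · show p.2.2.2 / D2 ^ 2 = A2 ^ 2 * p.2.2.2
    rw [div_eq_iff (pow_ne_zero 2 hD2)]
    linear_combination (-(A2 * p.2.2.2 * D2) - p.2.2.2) * h2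

/-- The squared product of the two embeddings of a unit is 1. -/
lemma unit_norm_sq (hk1 : 1 < k) (u : (R k)ˣ) :
    (((u : R k) : ℝ × ℝ).1 * ((u : R k) : ℝ × ℝ).2) ^ 2 = 1 := by
  obtain ⟨m, hm⟩ := Nm_int k hk1 (u : R k)
  obtain ⟨m', hm'⟩ := Nm_int k hk1 ((u⁻¹ : (R k)ˣ) : R k)
  have h : Nm k (u : R k) * Nm k ((u⁻¹ : (R k)ˣ) : R k) = 1 := by
    rw [← Nm_mul, Units.mul_inv, Nm_one]
  rw [hm, hm'] at h
  have hz : m * m' = 1 := by exact_mod_cast h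
  have : m = 1 ∨ m = -1 := Int.isUnit_iff.mp (IsUnit.of_mul_eq_one _ hz)
  have hNm : Nm k (u : R k) = (m : ℝ) := hm
  unfold Nm at hNm
  rcases this with h1 | h1 <;> rw [hNm, h1] <;> norm_num

lemma unit_fst_ne (hk1 : 1 < k) (u : (R k)ˣ) : ((u : R k) : ℝ × ℝ).1 ≠ 0 := by
  intro h
  have := unit_norm_sq k hk1 u
  rw [h] at this
  norm_num at this

lemma unit_snd_sq (hk1 : 1 < k) (u : (R k)ˣ) :
    ((u : R k) : ℝ × ℝ).2 ^ 2 = (((u : R k) : ℝ × ℝ).1 ^ 2)⁻¹ := by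
  have h := unit_norm_sq k hk1 u
  have h1 := unit_fst_ne k hk1 u
  field_simp
  linear_combination h

end ActTri
section Part2

variable (k : ℕ)

lemma coe_int_omR (m1 m2 : ℤ) :
    (((m1 : R k) + (m2 : R k) * omR k : R k) : ℝ × ℝ)
      = ((m1 : ℝ) + (m2 : ℝ) * omg k, (m1 : ℝ) + (m2 : ℝ) * omg' k) := by
  push_cast
  refine Prod.ext ?_ ?_ <;> simp [omR, Prod.fst_add, Prod.snd_add, Prod.fst_mul, Prod.snd_mul]

lemma unit_emb1_zpow (e : (R k)ˣ) (n : ℤ) :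
    (((e ^ n : (R k)ˣ) : R k) : ℝ × ℝ).1 = (eps k e) ^ n := by
  have h1 : (((e ^ n : (R k)ˣ) : R k) : ℝ × ℝ).1
      = ((Units.map (emb1 k) (e ^ n) : ℝˣ) : ℝ) := rfl
  rw [h1, map_zpow, Units.val_zpow_eq_zpow_val]
  rfl

lemma part2 (hk1 : 1 < k) (e : (R k)ˣ) (he : IsFundUnit k e) :
    ∀ p ∈ HH, ∃ g : SL k, g.1 1 0 = 0 ∧ p ∈ act k g '' FInf k (eps k e) := by
  intro p hp
  set ε := eps k e with hεdef
  have hε : 1 < ε := he.1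
  have hε2 : (0:ℝ) < ε ^ 2 := by positivity
  have hy1 : 0 < y1 p := hp.1
  have hy2 : 0 < y2 p := hp.2
  have hrpos : 0 < rr p := div_pos hy1 hy2
  have hεsq : (1:ℝ) < ε ^ 2 := by nlinarith [hε]
  have hε4 : (1:ℝ) < ε ^ 4 := by nlinarith [hεsq]
  obtain ⟨n, hn1, hn2⟩ := exists_mem_Ico_zpow (x := rr p * ε ^ 2) (y := ε ^ 4)
    (by positivity) hε4
  set u : (R k)ˣ := e ^ n with hu
  set A1 : ℝ := ((u : R k) : ℝ × ℝ).1 with hA1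
  set A2 : ℝ := ((u : R k) : ℝ × ℝ).2 with hA2
  have hA1eps : A1 = ε ^ n := unit_emb1_zpow k e n
  have hA1ne : A1 ≠ 0 := unit_fst_ne k hk1 u
  have hA2sq : A2 ^ 2 = (A1 ^ 2)⁻¹ := unit_snd_sq k hk1 u
  have hA2ne : A2 ≠ 0 := by
    intro h
    rw [h] at hA2sq
    have : A1 ^ 2 ≠ 0 := pow_ne_zero 2 hA1ne
    field_simp at hA2sq
    norm_num at hA2sq
  have hεne : ε ≠ 0 := by positivity
  -- A1^4 = (ε^4)^n
  have hA14 : A1 ^ 2 * A1 ^ 2 = (ε ^ 4) ^ n := by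
    rw [hA1eps, ← zpow_natCast (ε ^ n) 2, ← zpow_mul, ← zpow_add₀ hεne,
      ← zpow_natCast ε 4, ← zpow_mul]
    ring_nf
  set T : ℝ := (ε ^ 4) ^ n with hT
  have hTpos : 0 < T := by
    rw [hT]
    exact zpow_pos (by positivity) n
  -- the base point scaled
  set X1 : ℝ := p.1 / A1 ^ 2 with hX1
  set X2 : ℝ := p.2.1 / A2 ^ 2 with hX2
  have hw := omg_pos k hk1
  have hw' := omg'_neg k hk1
  have hww' := omg_sub_omg' k hk1
  have hwne : omg' k - omg k ≠ 0 := by linarith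
  set S1b : ℝ := (omg' k * X1 - omg k * X2) / (omg' k - omg k) with hS1b
  set S2b : ℝ := (X1 - X2) / (omg k - omg' k) with hS2b
  set m1 : ℤ := round S1b with hm1
  set m2 : ℤ := round S2b with hm2
  set β : R k := (m1 : R k) + (m2 : R k) * omR k with hβ
  have hβcoe : (β : ℝ × ℝ) = ((m1 : ℝ) + (m2 : ℝ) * omg k, (m1 : ℝ) + (m2 : ℝ) * omg' k) :=
    coe_int_omR k m1 m2
  -- the matrix
  have hdet : ((u : R k) * ((u⁻¹ : (R k)ˣ) : R k)) = 1 := Units.mul_inv u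
  set g : SL k := ⟨!![(u : R k), (u : R k) * β; 0, ((u⁻¹ : (R k)ˣ) : R k)], by
    rw [Matrix.det_fin_two_of]
    rw [hdet]
    ring⟩ with hg
  have hc : g.1 1 0 = 0 := by
    show !![(u : R k), (u : R k) * β; 0, ((u⁻¹ : (R k)ˣ) : R k)] 1 0 = 0
    simp [Matrix.cons_val_zero, Matrix.cons_val_one, Matrix.head_cons]
  have hg00 : g.1 0 0 = (u : R k) := by
    show !![(u : R k), (u : R k) * β; 0, ((u⁻¹ : (R k)ˣ) : R k)] 0 0 = _
    simp [Matrix.cons_val_zero]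
  have hg01 : g.1 0 1 = (u : R k) * β := by
    show !![(u : R k), (u : R k) * β; 0, ((u⁻¹ : (R k)ˣ) : R k)] 0 1 = _
    simp [Matrix.cons_val_zero, Matrix.cons_val_one, Matrix.head_cons]
  refine ⟨g, hc, ?_⟩
  -- the preimage point
  set q : Pt := (p.1 / A1 ^ 2 - ((m1 : ℝ) + (m2 : ℝ) * omg k),
      p.2.1 / A2 ^ 2 - ((m1 : ℝ) + (m2 : ℝ) * omg' k),
      p.2.2.1 / A1 ^ 2, p.2.2.2 / A2 ^ 2) with hq
  have hqHH : q ∈ HH := by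
    constructor
    · show 0 < p.2.2.1 / A1 ^ 2
      apply div_pos hy1 (by positivity)
    · show 0 < p.2.2.2 / A2 ^ 2
      apply div_pos hy2 (by positivity)
  have hqs1 : s1 k q = S1b - m1 := by
    show (omg' k * (X1 - ((m1 : ℝ) + (m2 : ℝ) * omg k))
        - omg k * (X2 - ((m1 : ℝ) + (m2 : ℝ) * omg' k))) / (omg' k - omg k) = S1b - m1
    rw [hS1b]
    field_simp
    ring
  have hqs2 : s2 k q = S2b - m2 := by
    show ((X1 - ((m1 : ℝ) + (m2 : ℝ) * omg k))
        - (X2 - ((m1 : ℝ) + (m2 : ℝ) * omg' k))) / (omg k - omg' k) = S2b - m2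
    rw [hS2b]
    have : omg k - omg' k ≠ 0 := by linarith
    field_simp
    ring
  have hqrr : rr q = rr p / T := by
    show (p.2.2.1 / A1 ^ 2) / (p.2.2.2 / A2 ^ 2) = rr p / T
    rw [rr, ← hA14, hA2sq]
    unfold y1 y2
    field_simp
  have hqF : q ∈ FInf k ε := by
    refine ⟨hqHH, ?_, ?_, ?_, ?_⟩
    · rw [hqs1, hm1]
      exact abs_sub_round S1b
    · rw [hqs2, hm2]
      exact abs_sub_round S2b
    · rw [hqrr, le_div_iff₀ hTpos]
      have hx : (ε ^ 2)⁻¹ * (rr p * ε ^ 2) = rr p := by field_simp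
      have := mul_le_mul_of_nonneg_left hn1 (inv_pos.mpr hε2).le
      linarith [this, hx]
    · rw [hqrr, div_le_iff₀ hTpos]
      have hTsucc : (ε ^ 4 : ℝ) ^ (n + 1) = (ε ^ 2 * T) * ε ^ 2 := by
        rw [zpow_add_one₀ (by positivity : (ε:ℝ)^4 ≠ 0), ← hT]
        ring
      have h9 : rr p * ε ^ 2 < (ε ^ 2 * T) * ε ^ 2 := by
        rw [← hTsucc]
        exact hn2
      exact le_of_mul_le_mul_right h9.le hε2
  refine ⟨q, hqF, ?_⟩
  rw [act_tri k g hc q, hg00, hg01]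
  have hub1 : (((u : R k) * β : R k) : ℝ × ℝ).1 = A1 * ((m1 : ℝ) + (m2 : ℝ) * omg k) := by
    push_cast
    rw [Prod.fst_mul, hβcoe]
  have hub2 : (((u : R k) * β : R k) : ℝ × ℝ).2 = A2 * ((m1 : ℝ) + (m2 : ℝ) * omg' k) := by
    push_cast
    rw [Prod.snd_mul, hβcoe]
  rw [hub1, hub2]
  refine Prod.ext ?_ (Prod.ext ?_ (Prod.ext ?_ ?_))
  · show A1 ^ 2 * (p.1 / A1 ^ 2 - ((m1 : ℝ) + (m2 : ℝ) * omg k))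
        + A1 * (A1 * ((m1 : ℝ) + (m2 : ℝ) * omg k)) = p.1
    field_simp
    ring
  · show A2 ^ 2 * (p.2.1 / A2 ^ 2 - ((m1 : ℝ) + (m2 : ℝ) * omg' k))
        + A2 * (A2 * ((m1 : ℝ) + (m2 : ℝ) * omg' k)) = p.2.1
    field_simp
    ring
  · show A1 ^ 2 * (p.2.2.1 / A1 ^ 2) = p.2.2.1
    field_simp
  · show A2 ^ 2 * (p.2.2.2 / A2 ^ 2) = p.2.2.2
    field_simp

end Part2
section Pert

/-- If `p` is interior to `F`, `f` is affine along direction `v` with nonzero slope, and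
`f` is bounded on `F`, then the bounds at `p` are strict. -/
lemma pert {F : Set Pt} {p : Pt} (v : Pt) (hp : p ∈ interior F) {f : Pt → ℝ} {c lo hi : ℝ}
    (hf : ∀ t : ℝ, f (p + t • v) = f p + t * c) (hc : c ≠ 0)
    (hF : ∀ x ∈ F, lo ≤ f x ∧ f x ≤ hi) : lo < f p ∧ f p < hi := by
  have hcont : Continuous (fun t : ℝ => p + t • v) := by fun_prop
  have h0 : (fun t : ℝ => p + t • v) 0 = p := by simp
  have hnb : (fun t : ℝ => p + t • v) ⁻¹' (interior F) ∈ nhds (0 : ℝ) := by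
    apply hcont.continuousAt.preimage_mem_nhds
    simp only [zero_smul, add_zero]
    exact isOpen_interior.mem_nhds hp
  obtain ⟨η, hη, hball⟩ := Metric.mem_nhds_iff.mp hnb
  set s : ℝ := if 0 < c then η / 2 else -(η / 2) with hs
  have hsc : s * c = (η / 2) * |c| := by
    rcases abs_cases c with ⟨h1, h2⟩ | ⟨h1, h2⟩
    · rw [hs, if_pos (lt_of_le_of_ne h2 (Ne.symm hc)), h1]
    · have : ¬ (0 < c) := by linarith
      rw [hs, if_neg this, h1]; ring
  have hscpos : 0 < s * c := by
    rw [hsc]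
    have : 0 < |c| := abs_pos.mpr hc
    positivity
  have hmem : ∀ t : ℝ, |t| < η → (p + t • v) ∈ F := by
    intro t ht
    have : t ∈ Metric.ball (0:ℝ) η := by
      rw [Metric.mem_ball, Real.dist_eq, sub_zero]
      exact ht
    exact interior_subset (hball this)
  have habs : |s| < η := by
    rw [hs]; split_ifs
    · rw [abs_of_pos (by linarith)]; linarith
    · rw [abs_neg, abs_of_pos (by linarith)]; linarith
  have h1 := hF _ (hmem s habs)
  have h2 := hF _ (hmem (-s) (by rwa [abs_neg]))
  rw [hf s] at h1
  rw [hf (-s)] at h2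
  constructor
  · have := h2.1
    nlinarith [this, hscpos]
  · have := h1.2
    nlinarith [this, hscpos]

/-- Interior points of `F_∞` satisfy the strict inequalities. -/
lemma interior_strict (k : ℕ) (hk1 : 1 < k) (ε : ℝ) {p : Pt}
    (hp : p ∈ interior (FInf k ε)) :
    p ∈ HH ∧ |s1 k p| < 1/2 ∧ |s2 k p| < 1/2 ∧ (ε^2)⁻¹ < rr p ∧ rr p < ε^2 := by
  have hpF : p ∈ FInf k ε := interior_subset hp
  have hpH : p ∈ HH := hpF.1
  have hw := omg_pos k hk1
  have hw' := omg'_neg k hk1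
  have hww' := omg_sub_omg' k hk1
  have hwne : omg' k - omg k ≠ 0 := by linarith
  have hwne2 : omg k - omg' k ≠ 0 := by linarith
  refine ⟨hpH, ?_, ?_, ?_⟩
  · rw [abs_lt]
    have := pert (F := FInf k ε) (v := ((1:ℝ), (0:ℝ), (0:ℝ), (0:ℝ))) hp
      (f := s1 k) (c := omg' k / (omg' k - omg k)) (lo := -(1/2)) (hi := 1/2)
      ?_ (div_ne_zero (by linarith) hwne) ?_
    · exact this
    · intro t
      show (omg' k * (p.1 + t * 1) - omg k * (p.2.1 + t * 0)) / (omg' k - omg k)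
        = (omg' k * p.1 - omg k * p.2.1) / (omg' k - omg k) + t * (omg' k / (omg' k - omg k))
      field_simp
      ring
    · intro x hx
      exact abs_le.mp hx.2.1
  · rw [abs_lt]
    have := pert (F := FInf k ε) (v := ((1:ℝ), (0:ℝ), (0:ℝ), (0:ℝ))) hp
      (f := s2 k) (c := 1 / (omg k - omg' k)) (lo := -(1/2)) (hi := 1/2)
      ?_ (div_ne_zero one_ne_zero hwne2) ?_
    · exact this
    · intro t
      show ((p.1 + t * 1) - (p.2.1 + t * 0)) / (omg k - omg' k)
        = (p.1 - p.2.1) / (omg k - omg' k) + t * (1 / (omg k - omg' k))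
      field_simp
      ring
    · intro x hx
      exact abs_le.mp hx.2.2.1
  · have hy2 : 0 < y2 p := hpH.2
    have := pert (F := FInf k ε) (v := ((0:ℝ), (0:ℝ), (1:ℝ), (0:ℝ))) hp
      (f := rr) (c := (y2 p)⁻¹) (lo := (ε^2)⁻¹) (hi := ε^2)
      ?_ (inv_ne_zero (ne_of_gt hy2)) ?_
    · exact this
    · intro t
      show (p.2.2.1 + t * 1) / (p.2.2.2 + t * 0) = p.2.2.1 / p.2.2.2 + t * (p.2.2.2)⁻¹
      have : p.2.2.2 ≠ 0 := ne_of_gt hy2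
      field_simp
      rw [mul_zero, add_zero, mul_div_cancel_right₀ _ this]
    · intro x hx
      exact ⟨hx.2.2.2.1, hx.2.2.2.2⟩

end Pert
section Part3

variable (k : ℕ)

lemma sqrt_irrational (hk : Squarefree k) (hk1 : 1 < k) : Irrational (Real.sqrt k) := by
  rw [irrational_sqrt_natCast_iff]
  rintro ⟨r, hr⟩
  have hu : IsUnit r := hk r (by rw [hr])
  rw [Nat.isUnit_iff] at hu
  rw [hu, mul_one] at hr
  omega

lemma fund_bound (e : (R k)ˣ) (he : IsFundUnit k e) (v : (R k)ˣ)
    (h : 1 < |(unitVal k v).1|) : eps k e ≤ |(unitVal k v).1| := by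
  rcases abs_cases (unitVal k v).1 with ⟨h1, _⟩ | ⟨h1, _⟩
  · rw [h1] at h ⊢
    exact he.2 v h
  · have hval : (unitVal k (-v)).1 = -(unitVal k v).1 := by
      unfold unitVal
      rw [Units.val_neg]
      push_cast
      rfl
    rw [h1] at h ⊢
    rw [← hval] at h ⊢
    exact he.2 (-v) h

set_option maxHeartbeats 2000000 in
lemma part3 (hk : Squarefree k) (hk1 : 1 < k) (e : (R k)ˣ) (he : IsFundUnit k e) :
    ∀ g : SL k, g.1 1 0 = 0 → g ≠ 1 → g.1 ≠ -1 →
      ¬ ∃ p : Pt, p ∈ interior (FInf k (eps k e)) ∧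
        act k g p ∈ interior (FInf k (eps k e)) := by
  rintro g hc hg1 hgm1 ⟨p, hpint, hqint⟩
  set ε := eps k e with hεdef
  have hε : 1 < ε := he.1
  have hεpos : (0:ℝ) < ε := by linarith
  have hε2 : (0:ℝ) < ε ^ 2 := by positivity
  obtain ⟨hpH, hps1, hps2, hpr1, hpr2⟩ := interior_strict k hk1 ε hpint
  obtain ⟨hqH, hqs1, hqs2, hqr1, hqr2⟩ := interior_strict k hk1 ε hqint
  have hrp : 0 < rr p := div_pos hpH.1 hpH.2
  have hdet := det_entries k g hc
  have hd1 := det_entries1 k g hc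
  have hQ := act_tri k g hc p
  set q : Pt := act k g p with hqdef
  set a := g.1 0 0 with ha
  set b := g.1 0 1 with hb
  set d := g.1 1 1 with hd
  set A1 : ℝ := (a : ℝ × ℝ).1 with hA1def
  set A2 : ℝ := (a : ℝ × ℝ).2 with hA2def
  set B1 : ℝ := (b : ℝ × ℝ).1 with hB1def
  set B2 : ℝ := (b : ℝ × ℝ).2 with hB2def
  set D1 : ℝ := (d : ℝ × ℝ).1 with hD1def
  clear_value q a b d A1 A2 B1 B2 D1
  obtain ⟨u, hu⟩ := IsUnit.of_mul_eq_one d hdet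
  have hA1ne : A1 ≠ 0 := by
    have := unit_fst_ne k hk1 u
    rw [hu, ← hA1def] at this
    exact this
  have hA2sq : A2 ^ 2 = (A1 ^ 2)⁻¹ := by
    have := unit_snd_sq k hk1 u
    rw [hu, ← hA1def, ← hA2def] at this
    exact this
  have hA2ne : A2 ≠ 0 := by
    intro h
    rw [h] at hA2sq
    have h2 : A1 ^ 2 ≠ 0 := pow_ne_zero 2 hA1ne
    field_simp at hA2sq
    norm_num at hA2sq
  have hy2p : p.2.2.2 ≠ 0 := ne_of_gt hpH.2
  have hrrq : rr q = (A1 ^ 2 * A1 ^ 2) * rr p := by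
    rw [hQ]
    show (A1 ^ 2 * p.2.2.1) / (A2 ^ 2 * p.2.2.2) = (A1 ^ 2 * A1 ^ 2) * (p.2.2.1 / p.2.2.2)
    rw [hA2sq]
    field_simp
  rw [hrrq] at hqr1 hqr2
  -- Step 1 : A1² = 1
  have hA1sq : A1 ^ 2 = 1 := by
    rcases lt_trichotomy |A1| 1 with hlt | heq | hgt
    · exfalso
      have hAD : A1 * D1 = 1 := hd1
      have hD1ne : D1 ≠ 0 := right_ne_zero_of_mul_eq_one hAD
      have huinv : ((u⁻¹ : (R k)ˣ) : R k) = d :=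
        Units.inv_eq_of_mul_eq_one_right (by rw [hu]; exact hdet)
      have hD1abs : 1 < |D1| := by
        have habsmul : |A1| * |D1| = 1 := by rw [← abs_mul, hAD, abs_one]
        have h0 : 0 < |A1| := abs_pos.mpr hA1ne
        nlinarith [abs_nonneg D1]
      have hge : ε ≤ |D1| := by
        have h' : (unitVal k u⁻¹).1 = D1 := by
          unfold unitVal
          rw [huinv]
          exact hD1def.symm
        have := fund_bound k e he u⁻¹ (by rw [h']; exact hD1abs)
        rwa [h'] at this
      have h5 : ε ^ 4 ≤ |D1| ^ 4 := pow_le_pow_left₀ hεpos.le hge 4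
      have h6 : |D1| ^ 4 = D1 ^ 2 * D1 ^ 2 := by
        rw [show (4:ℕ) = 2 * 2 by norm_num, pow_mul, sq_abs]
        ring
      have hD12pos : 0 < D1 ^ 2 * D1 ^ 2 := by
        rcases hD1ne.lt_or_gt with h | h <;> nlinarith
      have hA1D14 : (A1 ^ 2 * A1 ^ 2) * (D1 ^ 2 * D1 ^ 2) = 1 := by
        have h44 : (A1 ^ 2 * A1 ^ 2) * (D1 ^ 2 * D1 ^ 2) = (A1 * D1) ^ 4 := by ring
        rw [h44, hAD]
        norm_num
      have m3 : (ε ^ 2)⁻¹ * (D1 ^ 2 * D1 ^ 2) < rr p := by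
        have hmul := mul_lt_mul_of_pos_right hqr1 hD12pos
        have hidq : (A1 ^ 2 * A1 ^ 2 * rr p) * (D1 ^ 2 * D1 ^ 2) = rr p := by
          linear_combination rr p * hA1D14
        linarith [hmul, hidq]
      have m4 : (ε ^ 2)⁻¹ * ε ^ 4 ≤ (ε ^ 2)⁻¹ * (D1 ^ 2 * D1 ^ 2) := by
        apply mul_le_mul_of_nonneg_left _ (by positivity)
        linarith [h5, h6]
      have hid : (ε ^ 2)⁻¹ * ε ^ 4 = ε ^ 2 := by field_simp
      linarith [m3, m4, hid, hpr2]
    · rw [← sq_abs, heq, one_pow]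
    · exfalso
      have hge : ε ≤ |A1| := by
        have h' : (unitVal k u).1 = A1 := by
          unfold unitVal; rw [hu]; exact hA1def.symm
        have := fund_bound k e he u (by rw [h']; exact hgt)
        rwa [h'] at this
      have h5 : ε ^ 4 ≤ |A1| ^ 4 := pow_le_pow_left₀ hεpos.le hge 4
      have h6 : |A1| ^ 4 = A1 ^ 2 * A1 ^ 2 := by
        rw [show (4:ℕ) = 2 * 2 by norm_num, pow_mul, sq_abs]
        ring
      have m1 : ε ^ 4 * rr p ≤ (A1 ^ 2 * A1 ^ 2) * rr p := by
        apply mul_le_mul_of_nonneg_right _ hrp.le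
        linarith [h5, h6]
      have m2 : ε ^ 4 * (ε ^ 2)⁻¹ < ε ^ 4 * rr p :=
        mul_lt_mul_of_pos_left hpr1 (by positivity)
      have hid : ε ^ 4 * (ε ^ 2)⁻¹ = ε ^ 2 := by field_simp
      linarith [m1, m2, hid, hqr2]
  have hA2sq1 : A2 ^ 2 = 1 := by rw [hA2sq, hA1sq]; norm_num
  have hA1c : A1 = 1 ∨ A1 = -1 := by
    have h : (A1 - 1) * (A1 + 1) = 0 := by linear_combination hA1sq
    rcases mul_eq_zero.mp h with h | h
    · left; linarith
    · right; linarith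
  have hA2c : A2 = 1 ∨ A2 = -1 := by
    have h : (A2 - 1) * (A2 + 1) = 0 := by linear_combination hA2sq1
    rcases mul_eq_zero.mp h with h | h
    · left; linarith
    · right; linarith
  -- Step 2 : A2 = A1
  have hA12 : A2 = A1 := by
    by_contra hne
    have hA2eq : A2 = -A1 := by
      rcases hA1c with h1 | h1 <;> rcases hA2c with h2 | h2
      · exact absurd (h2.trans h1.symm) hne
      · rw [h1, h2]; try norm_num
      · rw [h1, h2]; try norm_num
      · exact absurd (h2.trans h1.symm) hne
    obtain ⟨m, n, hrep⟩ := rep k hk1 a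
    have hr1 : A1 = (m : ℝ) + n * omg k := by
      rw [hA1def]; exact congrArg Prod.fst hrep
    have hr2 : A2 = (m : ℝ) + n * omg' k := by
      rw [hA2def]; exact congrArg Prod.snd hrep
    have hn0 : n ≠ 0 := by
      intro h
      rw [h] at hr1 hr2
      push_cast at hr1 hr2
      have : A1 = A2 := by rw [hr1, hr2]; ring
      rcases hA1c with h1 | h1 <;> rw [h1] at this hA2eq <;> rw [← this] at hA2eq <;>
        norm_num at hA2eq
    have hk0ne : k0 k ≠ 0 := ne_of_gt (k0_pos k)
    have hdiff : omg k - omg' k = 2 * Real.sqrt k / k0 k := by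
      unfold omg omg'
      field_simp
      ring
    have hknk : (n : ℝ) * (omg k - omg' k) = 2 * A1 := by
      have hsub : A1 - A2 = (n : ℝ) * (omg k - omg' k) := by rw [hr1, hr2]; ring
      rw [hA2eq] at hsub
      linarith [hsub]
    have heq2 : (n : ℝ) * Real.sqrt k = A1 * k0 k := by
      rw [hdiff] at hknk
      field_simp at hknk
      linarith [hknk]
    have hirr : Irrational ((n : ℝ) * Real.sqrt k) :=
      (sqrt_irrational k hk hk1).intCast_mul hn0
    set K0 : ℤ := if k % 4 = 1 then 2 else 1 with hK0
    have hK0cast : (K0 : ℝ) = k0 k := by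
      rw [hK0]
      unfold k0
      split_ifs <;> norm_num
    rcases hA1c with h1 | h1
    · rw [heq2, h1, one_mul, ← hK0cast] at hirr
      exact Int.not_irrational K0 hirr
    · rw [heq2, h1, ← hK0cast] at hirr
      have : (-1 : ℝ) * (K0 : ℝ) = ((-K0 : ℤ) : ℝ) := by push_cast; ring
      rw [this] at hirr
      exact Int.not_irrational (-K0) hirr
  -- Step 3 : translation part must vanish
  have hw := omg_pos k hk1
  have hw' := omg'_neg k hk1
  have hww' := omg_sub_omg' k hk1
  have hwne : omg' k - omg k ≠ 0 := by linarith
  have hwne2 : omg k - omg' k ≠ 0 := by linarith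
  obtain ⟨m1, n1, hbrep⟩ := rep k hk1 b
  have hbr1 : B1 = (m1 : ℝ) + n1 * omg k := by
    rw [hB1def]; exact congrArg Prod.fst hbrep
  have hbr2 : B2 = (m1 : ℝ) + n1 * omg' k := by
    rw [hB2def]; exact congrArg Prod.snd hbrep
  have hx1q : q.1 = p.1 + A1 * B1 := by
    rw [hQ]
    show A1 ^ 2 * p.1 + A1 * B1 = p.1 + A1 * B1
    rw [hA1sq]; ring
  have hx2q : q.2.1 = p.2.1 + A1 * B2 := by
    rw [hQ]
    show A2 ^ 2 * p.2.1 + A2 * B2 = p.2.1 + A1 * B2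
    rw [hA2sq1, hA12]; ring
  have hs1q : s1 k q = s1 k p + A1 * m1 := by
    unfold s1 x1 x2
    rw [hx1q, hx2q, hbr1, hbr2]
    field_simp
    ring
  have hs2q : s2 k q = s2 k p + A1 * n1 := by
    unfold s2 x1 x2
    rw [hx1q, hx2q, hbr1, hbr2]
    field_simp
    ring
  have habsA1 : |A1| = 1 := by
    rcases hA1c with h | h <;> rw [h] <;> norm_num
  have hm1 : m1 = 0 := by
    have h' : |A1 * (m1 : ℝ)| < 1 := by
      have heq' : A1 * (m1 : ℝ) = s1 k q - s1 k p := by linarith [hs1q]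
      rw [heq', sub_eq_add_neg]
      calc |s1 k q + -(s1 k p)| ≤ |s1 k q| + |-(s1 k p)| := abs_add_le _ _
        _ = |s1 k q| + |s1 k p| := by rw [abs_neg]
        _ < 1 := by linarith
    rw [abs_mul, habsA1, one_mul, ← Int.cast_abs] at h'
    have h2 : |m1| < 1 := by exact_mod_cast h'
    have h3 := abs_lt.mp h2
    omega
  have hn1 : n1 = 0 := by
    have h' : |A1 * (n1 : ℝ)| < 1 := by
      have heq' : A1 * (n1 : ℝ) = s2 k q - s2 k p := by linarith [hs2q]
      rw [heq', sub_eq_add_neg]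
      calc |s2 k q + -(s2 k p)| ≤ |s2 k q| + |-(s2 k p)| := abs_add_le _ _
        _ = |s2 k q| + |s2 k p| := by rw [abs_neg]
        _ < 1 := by linarith
    rw [abs_mul, habsA1, one_mul, ← Int.cast_abs] at h'
    have h2 : |n1| < 1 := by exact_mod_cast h'
    have h3 := abs_lt.mp h2
    omega
  have hb0 : b = 0 := by
    apply Subtype.ext
    rw [hbrep, hm1, hn1]
    push_cast
    simp
  -- Step 4 : conclude g = ±1
  rcases hA1c with hσ | hσ
  · -- a = 1, d = 1, g = 1
    have ha1 : a = 1 := by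
      apply Subtype.ext
      have : (a : ℝ × ℝ) = (1, 1) := Prod.ext (by rw [← hA1def, hσ]) (by
        rw [← hA2def, hA12, hσ])
      rw [this]
      rfl
    have hd1' : d = 1 := by
      rw [ha1, one_mul] at hdet
      exact hdet
    apply hg1
    apply Subtype.ext
    rw [Matrix.SpecialLinearGroup.coe_one]
    refine Matrix.ext fun i j => ?_
    fin_cases i <;> fin_cases j
    · show g.1 0 0 = (1 : Matrix (Fin 2) (Fin 2) (R k)) 0 0
      rw [Matrix.one_apply_eq, ← ha, ha1]
    · show g.1 0 1 = (1 : Matrix (Fin 2) (Fin 2) (R k)) 0 1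
      rw [Matrix.one_apply_ne (by decide), ← hb, hb0]
    · show g.1 1 0 = (1 : Matrix (Fin 2) (Fin 2) (R k)) 1 0
      rw [Matrix.one_apply_ne (by decide), hc]
    · show g.1 1 1 = (1 : Matrix (Fin 2) (Fin 2) (R k)) 1 1
      rw [Matrix.one_apply_eq, ← hd, hd1']
  · -- a = -1, d = -1, g = -1
    have ha1 : a = -1 := by
      apply Subtype.ext
      have : (a : ℝ × ℝ) = (-1, -1) := Prod.ext (by rw [← hA1def, hσ]) (by
        rw [← hA2def, hA12, hσ])
      rw [this]
      rfl
    have hd1' : d = -1 := by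
      rw [ha1] at hdet
      linear_combination -hdet
    apply hgm1
    refine Matrix.ext fun i j => ?_
    fin_cases i <;> fin_cases j
    · show g.1 0 0 = (-1 : Matrix (Fin 2) (Fin 2) (R k)) 0 0
      rw [Matrix.neg_apply, Matrix.one_apply_eq, ← ha, ha1]
    · show g.1 0 1 = (-1 : Matrix (Fin 2) (Fin 2) (R k)) 0 1
      rw [Matrix.neg_apply, Matrix.one_apply_ne (by decide), ← hb, hb0, neg_zero]
    · show g.1 1 0 = (-1 : Matrix (Fin 2) (Fin 2) (R k)) 1 0
      rw [Matrix.neg_apply, Matrix.one_apply_ne (by decide), hc, neg_zero]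
    · show g.1 1 1 = (-1 : Matrix (Fin 2) (Fin 2) (R k)) 1 1
      rw [Matrix.neg_apply, Matrix.one_apply_eq, ← hd, hd1']

end Part3

/-- `F_∞` is a fundamental domain for the action of `Γ_∞` (the stabilizer of
`∞` in `Γ = PSL₂(R)`, given by the elements of `SL₂(R)` with lower-left entry `0`) on `H²×H²`:
the boundary of `F_∞` (taken in `H²×H²`) has Lebesgue measure `0`, the translates `γ(F_∞)`
for `γ ∈ Γ_∞` cover `H²×H²`, and for `γ ∈ Γ_∞` with `γ ≠ 1` in `PSL₂(R)` (i.e. `γ ≠ ±1` in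
`SL₂(R)`) there is no point `Z` with both `Z` and `γ(Z)` in the interior of `F_∞`. -/
theorem FInf_isFundamentalDomain (k : ℕ) (hk : Squarefree k) (hk1 : 1 < k)
    (e : (R k)ˣ) (he : IsFundUnit k e) :
    MeasureTheory.volume (frontier (FInf k (eps k e)) ∩ HH) = 0 ∧
    (∀ p ∈ HH, ∃ g : SL k, g.1 1 0 = 0 ∧ p ∈ act k g '' FInf k (eps k e)) ∧
    (∀ g : SL k, g.1 1 0 = 0 → g ≠ 1 → g.1 ≠ -1 →
      ¬ ∃ p : Pt, p ∈ interior (FInf k (eps k e)) ∧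
        act k g p ∈ interior (FInf k (eps k e))) := by
  have hεpos : (0:ℝ) < eps k e := by
    have h1 : 1 < eps k e := he.1
    linarith
  exact ⟨part1 k hk1 (eps k e) hεpos, part2 k hk1 e he, part3 k hk hk1 e he⟩

end Hilbert
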